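/- Let P=P(u,v) be a positive analytic function on an open neighborhood of the origin in ℝ², with P(0,0)=1, P_{uv}=0 identically, and Δ log P = φ(P) for an analytic function φ (where Δf=−f_{uu}−f_{vv}). Set ψ(r)=r²φ(r) and assume ψ''(1) − 2ψ'(1) ≠ 0. Then P depends only on one of the two variables: P(u,v)=1+f(u) or P(u,v)=1+g(v). -/

import Mathlib

open Set Metric Filter Real Topology

noncomputable section


/-- slice derivative in the first coordinate -/
lemma hasDerivAt_slice_fst {Q : ℝ × ℝ → ℝ} {x y : ℝ} (h : DifferentiableAt ℝ Q (x, y)) :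
    HasDerivAt (fun u => Q (u, y)) (fderiv ℝ Q (x, y) (1, 0)) x := by
  have h2 : HasDerivAt (fun u : ℝ => (u, y)) ((1:ℝ), (0:ℝ)) x :=
    (hasDerivAt_id x).prodMk (hasDerivAt_const x y)
  exact h.hasFDerivAt.comp_hasDerivAt x h2

lemma hasDerivAt_slice_snd {Q : ℝ × ℝ → ℝ} {x y : ℝ} (h : DifferentiableAt ℝ Q (x, y)) :
    HasDerivAt (fun v => Q (x, v)) (fderiv ℝ Q (x, y) (0, 1)) y := by
  have h2 : HasDerivAt (fun v : ℝ => (x, v)) ((0:ℝ), (1:ℝ)) y :=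
    (hasDerivAt_const y x).prodMk (hasDerivAt_id y)
  exact h.hasFDerivAt.comp_hasDerivAt y h2

/-- constancy on a convex open set from vanishing derivative -/
lemma const_of_hasDerivAt_zero {f : ℝ → ℝ} {t : Set ℝ} (ht : Convex ℝ t) (hto : IsOpen t)
    (hf : ∀ x ∈ t, HasDerivAt f 0 x) {x y : ℝ} (hx : x ∈ t) (hy : y ∈ t) : f x = f y := by
  apply ht.is_const_of_fderivWithin_eq_zero (𝕜 := ℝ) (f := f)
  · exact fun z hz => ((hf z hz).differentiableAt).differentiableWithinAt
  · intro z hz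
    rw [fderivWithin_of_isOpen hto hz]
    have : deriv f z = 0 := (hf z hz).deriv
    ext w
    simp [← toSpanSingleton_deriv, this]
  · exact hx
  · exact hy

lemma mem_ball_prod {p c : ℝ × ℝ} {r : ℝ} :
    p ∈ ball c r ↔ |p.1 - c.1| < r ∧ |p.2 - c.2| < r := by
  rw [mem_ball, Prod.dist_eq, max_lt_iff, Real.dist_eq, Real.dist_eq]

/-- a function with vanishing vertical derivative is vertically constant on balls -/
lemma vert_const_on_ball {Q : ℝ × ℝ → ℝ} {s : Set (ℝ × ℝ)}
    (hQ : ∀ p ∈ s, AnalyticAt ℝ Q p)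
    (hB : ∀ p ∈ s, fderiv ℝ Q p (0, 1) = 0)
    {c : ℝ × ℝ} {r : ℝ} (hball : ball c r ⊆ s) {p : ℝ × ℝ} (hp : p ∈ ball c r) :
    Q p = Q (p.1, c.2) := by
  obtain ⟨h1, h2⟩ := mem_ball_prod.1 hp
  have hc2 : |c.2 - c.2| < r := by simpa using lt_of_le_of_lt (abs_nonneg _) h2
  have key : ∀ v ∈ Ioo (c.2 - r) (c.2 + r), HasDerivAt (fun v => Q (p.1, v)) 0 v := by
    intro v hv
    have hmem : ((p.1, v) : ℝ × ℝ) ∈ ball c r := by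
      rw [mem_ball_prod]
      constructor
      · exact h1
      · simp only []
        rw [abs_sub_lt_iff]; constructor <;> [linarith [hv.2]; linarith [hv.1]]
    have := hasDerivAt_slice_snd (x := p.1) (y := v) ((hQ _ (hball hmem)).differentiableAt)
    rwa [hB _ (hball hmem)] at this
  have hconv : Convex ℝ (Ioo (c.2 - r) (c.2 + r)) := convex_Ioo _ _
  have := const_of_hasDerivAt_zero hconv isOpen_Ioo key (x := p.2) (y := c.2) ?_ ?_
  · exact this
  · constructor <;> [linarith [abs_sub_lt_iff.1 h2]; linarith [(abs_sub_lt_iff.1 h2).1]]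
  · have hr : 0 < r := lt_of_le_of_lt (abs_nonneg _) h2
    constructor <;> linarith



lemma glue_step {ρ xi xk xj : ℝ} (hρ : 0 < ρ) {Fi Fk Fj : ℝ → ℝ}
    (hFi : AnalyticOnNhd ℝ Fi (Ioo (xi - 2*ρ) (xi + 2*ρ)))
    (hFj : AnalyticOnNhd ℝ Fj (Ioo (xj - 2*ρ) (xj + 2*ρ)))
    (hik : EqOn Fi Fk (Ioo (max xi xk - 2*ρ) (min xi xk + 2*ρ)))
    (hkj : EqOn Fk Fj (Ioo (max xk xj - 2*ρ) (min xk xj + 2*ρ)))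
    (hspread : max xi (max xk xj) - min xi (min xk xj) < 4*ρ) :
    EqOn Fi Fj (Ioo (max xi xj - 2*ρ) (min xi xj + 2*ρ)) := by
  set c := (min xi (min xk xj) + max xi (max xk xj)) / 2 with hc
  have hbi : min xi (min xk xj) ≤ xi ∧ xi ≤ max xi (max xk xj) :=
    ⟨min_le_left _ _, le_max_left _ _⟩
  have hbk : min xi (min xk xj) ≤ xk ∧ xk ≤ max xi (max xk xj) :=
    ⟨le_trans (min_le_right _ _) (min_le_left _ _),
     le_trans (le_max_left _ _) (le_max_right _ _)⟩
  have hbj : min xi (min xk xj) ≤ xj ∧ xj ≤ max xi (max xk xj) :=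
    ⟨le_trans (min_le_right _ _) (min_le_right _ _),
     le_trans (le_max_right _ _) (le_max_right _ _)⟩
  have hci : |c - xi| < 2*ρ := by rw [abs_sub_lt_iff]; constructor <;> linarith [hbi.1, hbi.2]
  have hck : |c - xk| < 2*ρ := by rw [abs_sub_lt_iff]; constructor <;> linarith [hbk.1, hbk.2]
  have hcj : |c - xj| < 2*ρ := by rw [abs_sub_lt_iff]; constructor <;> linarith [hbj.1, hbj.2]
  have memW : ∀ a b : ℝ, |c - a| < 2*ρ → |c - b| < 2*ρ →
      c ∈ Ioo (max a b - 2*ρ) (min a b + 2*ρ) := by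
    intro a b ha hb
    have ha' := abs_sub_lt_iff.1 ha
    have hb' := abs_sub_lt_iff.1 hb
    constructor
    · rcases max_cases a b with ⟨h, _⟩ | ⟨h, _⟩ <;> rw [h] <;> linarith [ha'.2, hb'.2]
    · rcases min_cases a b with ⟨h, _⟩ | ⟨h, _⟩ <;> rw [h] <;> linarith [ha'.1, hb'.1]
  have hcik := memW _ _ hci hck
  have hckj := memW _ _ hck hcj
  have hcij := memW _ _ hci hcj
  have hWsub : Ioo (max xi xj - 2*ρ) (min xi xj + 2*ρ) ⊆ Ioo (xi - 2*ρ) (xi + 2*ρ) := by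
    apply Ioo_subset_Ioo <;> simp [sub_le_sub_iff_right, le_max_left, min_le_left, add_le_add_iff_right]
  have hWsub' : Ioo (max xi xj - 2*ρ) (min xi xj + 2*ρ) ⊆ Ioo (xj - 2*ρ) (xj + 2*ρ) := by
    apply Ioo_subset_Ioo <;> simp [sub_le_sub_iff_right, le_max_right, min_le_right, add_le_add_iff_right]
  apply AnalyticOnNhd.eqOn_of_preconnected_of_eventuallyEq (𝕜 := ℝ)
    (hFi.mono hWsub) (hFj.mono hWsub') isPreconnected_Ioo (z₀ := c) hcij
  have : Ioo (max xi xk - 2*ρ) (min xi xk + 2*ρ) ∩ Ioo (max xk xj - 2*ρ) (min xk xj + 2*ρ)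
      ∈ 𝓝 c := (IsOpen.mem_nhds (isOpen_Ioo.inter isOpen_Ioo) ⟨hcik, hckj⟩)
  filter_upwards [this] with z hz
  rw [hik hz.1, hkj hz.2]



lemma cross_exists {ρ : ℝ} (x : ℕ → ℝ) {N i j : ℕ}
    (hstep : ∀ k, k < N → |x (k+1) - x k| < ρ)
    (hij : i + 2 ≤ j) (hjN : j ≤ N) (h3 : 3*ρ < x j - x i) :
    ∃ k, i < k ∧ k < j ∧ x i + 2*ρ ≤ x k ∧ x k < x i + 3*ρ := by
  classical
  have hρ : 0 < ρ := by
    have h1 := hstep i (by omega : i < N)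
    have h2 := abs_nonneg (x (i+1) - x i)
    linarith
  have hPj : i < j ∧ x i + 2*ρ ≤ x j := ⟨by omega, by linarith⟩
  have hex : ∃ k, i < k ∧ x i + 2*ρ ≤ x k := ⟨j, hPj⟩
  set k := Nat.find hex with hk
  have hspec := Nat.find_spec hex
  have hkj' : k ≤ j - 1 := by
    apply Nat.find_le
    have hs := abs_sub_lt_iff.1 (hstep (j-1) (by omega))
    have : x (j - 1 + 1) = x j := by congr 1; omega
    rw [this] at hs
    exact ⟨by omega, by linarith [hs.1]⟩
  have hkj : k < j := by omega
  refine ⟨k, hspec.1, hkj, hspec.2, ?_⟩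
  rcases Nat.eq_or_lt_of_le (Nat.succ_le_of_lt hspec.1) with h1 | h2
  · -- k = i+1
    have hs := abs_sub_lt_iff.1 (hstep i (by omega))
    have hk1 : k = i + 1 := by omega
    rw [hk1]
    linarith [hs.1]
  · -- k - 1 > i
    have hmin := Nat.find_min hex (m := k - 1) (by omega)
    push_neg at hmin
    have hlt : x (k-1) < x i + 2*ρ := hmin (by omega)
    have hs := abs_sub_lt_iff.1 (hstep (k-1) (by omega))
    have : x (k - 1 + 1) = x k := by congr 1; omega
    rw [this] at hs
    linarith [hs.1]



lemma chain_glue {ρ : ℝ} (hρ : 0 < ρ) (x : ℕ → ℝ) (F : ℕ → ℝ → ℝ) (N : ℕ)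
    (hF : ∀ i, i ≤ N → AnalyticOnNhd ℝ (F i) (Ioo (x i - 2*ρ) (x i + 2*ρ)))
    (hstep : ∀ i, i < N → |x (i+1) - x i| < ρ)
    (hcons : ∀ i, i < N → EqOn (F i) (F (i+1)) (Ioo (x (i+1) - ρ) (x (i+1) + ρ))) :
    ∀ d i j, j - i = d → i ≤ j → j ≤ N →
      EqOn (F i) (F j) (Ioo (max (x i) (x j) - 2*ρ) (min (x i) (x j) + 2*ρ)) := by
  intro d
  induction d using Nat.strong_induction_on with
  | _ d IH =>
  intro i j hd hij hjN
  rcases Nat.eq_or_lt_of_le hij with rfl | hlt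
  · intro u _; rfl
  rcases Nat.eq_or_lt_of_le (Nat.succ_le_of_lt hlt) with hj1 | hlt2
  · subst hj1
    have hiN : i < N := lt_of_lt_of_le (Nat.lt_succ_self i) hjN
    have hb' := abs_sub_lt_iff.1 (hstep i hiN)
    apply AnalyticOnNhd.eqOn_of_preconnected_of_eventuallyEq (𝕜 := ℝ)
      ((hF i (le_of_lt hiN)).mono ?_) ((hF (i+1) hjN).mono ?_) isPreconnected_Ioo
      (z₀ := x (i+1)) ?_ ?_
    · apply Ioo_subset_Ioo <;>
        simp [sub_le_sub_iff_right, le_max_left, min_le_left, add_le_add_iff_right]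
    · apply Ioo_subset_Ioo <;>
        simp [sub_le_sub_iff_right, le_max_right, min_le_right, add_le_add_iff_right]
    · constructor
      · rcases max_cases (x i) (x (i+1)) with ⟨h, _⟩ | ⟨h, _⟩ <;> rw [h] <;> linarith
      · rcases min_cases (x i) (x (i+1)) with ⟨h, _⟩ | ⟨h, _⟩ <;> rw [h] <;> linarith
    · have : Ioo (x (i+1) - ρ) (x (i+1) + ρ) ∈ 𝓝 (x (i+1)) :=
        IsOpen.mem_nhds isOpen_Ioo (by constructor <;> linarith)
      filter_upwards [this] with z hz
      exact hcons i hiN hz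
  · by_cases hbig : 4*ρ ≤ |x i - x j|
    · have : ¬ (max (x i) (x j) - 2*ρ < min (x i) (x j) + 2*ρ) := by
        rcases abs_cases (x i - x j) with ⟨he, _⟩ | ⟨he, _⟩ <;> rw [he] at hbig <;>
          [ (have h1 : max (x i) (x j) = x i := max_eq_left (by linarith);
             have h2 : min (x i) (x j) = x j := min_eq_right (by linarith));
            (have h1 : max (x i) (x j) = x j := max_eq_right (by linarith);
             have h2 : min (x i) (x j) = x i := min_eq_left (by linarith))] <;>
          rw [h1, h2] <;> linarith
      rw [Set.Ioo_eq_empty this]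
      exact eqOn_empty _ _
    push_neg at hbig
    have hkey : ∃ k, i < k ∧ k < j ∧
        max (x i) (max (x k) (x j)) - min (x i) (min (x k) (x j)) < 4*ρ := by
      by_cases hsm : |x i - x j| ≤ 3*ρ
      · refine ⟨i+1, Nat.lt_succ_self i, by omega, ?_⟩
        have b1 := abs_sub_lt_iff.1 (hstep i (by omega))
        have b2 := abs_sub_le_iff.1 hsm
        simp only [max_def, min_def]
        split_ifs <;> linarith [b1.1, b1.2, b2.1, b2.2]
      · push_neg at hsm
        have hbig' := abs_sub_lt_iff.1 hbig
        rcases le_or_gt (x i) (x j) with hor | hor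
        · have h3 : 3*ρ < x j - x i := by
            rw [abs_sub_comm, abs_of_nonneg (by linarith)] at hsm; exact hsm
          obtain ⟨k, h1, h2, h3', h4⟩ := cross_exists x hstep (by omega) hjN h3
          refine ⟨k, h1, h2, ?_⟩
          rw [max_eq_right (by linarith : x k ≤ x j),
              max_eq_right (by linarith : x i ≤ x j),
              min_eq_left (by linarith : x k ≤ x j),
              min_eq_left (by linarith : x i ≤ x k)]
          linarith [hbig'.2]
        · have hsm' : 3*ρ < x i - x j := by rwa [abs_of_nonneg (by linarith)] at hsm
          have h3 : 3*ρ < (-x) j - (-x) i := by simp only [Pi.neg_apply]; linarith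
          have hstep' : ∀ k, k < N → |(-x) (k+1) - (-x) k| < ρ := by
            intro k hk
            simp only [Pi.neg_apply]
            rw [show -x (k+1) - -x k = -(x (k+1) - x k) by ring, abs_neg]
            exact hstep k hk
          obtain ⟨k, h1, h2, h3', h4⟩ := cross_exists (-x) hstep' (by omega) hjN h3
          simp only [Pi.neg_apply] at h3' h4
          refine ⟨k, h1, h2, ?_⟩
          rw [max_eq_left (by linarith : x j ≤ x k),
              max_eq_left (by linarith : x k ≤ x i),
              min_eq_right (by linarith : x j ≤ x k),
              min_eq_right (by linarith : x j ≤ x i)]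
          linarith [hbig'.1]
    obtain ⟨k, hik, hkj, hsp⟩ := hkey
    have e1 := IH (k - i) (by omega) i k (by omega) (by omega) (by omega)
    have e2 := IH (j - k) (by omega) k j (by omega) (by omega) hjN
    exact glue_step hρ (hF i (by omega)) (hF j hjN) e1 e2 hsp



lemma fiber_const {Q : ℝ × ℝ → ℝ} {s : Set (ℝ × ℝ)} (hs : IsOpen s)
    (hconn : IsPreconnected s)
    (hQ : ∀ p ∈ s, AnalyticAt ℝ Q p) (hB : ∀ p ∈ s, fderiv ℝ Q p (0, 1) = 0)
    {p q : ℝ × ℝ} (hp : p ∈ s) (hq : q ∈ s) (h1 : p.1 = q.1) : Q p = Q q := by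
  have hpath : IsPathConnected s := (hs.isConnected_iff_isPathConnected).1 ⟨⟨p, hp⟩, hconn⟩
  obtain ⟨γ, hγ⟩ := hpath.joinedIn p hp q hq
  have hK : IsCompact (range γ) := isCompact_range γ.continuous
  have hKs : range γ ⊆ s := range_subset_iff.2 hγ
  obtain ⟨δ, hδ, hthick⟩ := hK.exists_thickening_subset_open hs hKs
  set ρ := δ/2 with hρdef
  have hρ : 0 < ρ := by positivity
  have hball : ∀ t, ball (γ t) (2*ρ) ⊆ s := by
    intro t
    have : ball (γ t) δ ⊆ thickening δ (range γ) := ball_subset_thickening (mem_range_self t) δ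
    rw [show 2*ρ = δ by rw [hρdef]; ring]
    exact this.trans hthick
  have huc := CompactSpace.uniformContinuous_of_continuous γ.continuous
  obtain ⟨δ', hδ', huc'⟩ := Metric.uniformContinuous_iff.1 huc ρ hρ
  obtain ⟨N, hN⟩ := exists_nat_gt (1/δ')
  have hNpos : 0 < (N:ℝ) := lt_trans (by positivity) hN
  have hτmem : ∀ i : ℕ, min ((i:ℝ)/N) 1 ∈ unitInterval := by
    intro i
    constructor
    · exact le_min (by positivity) zero_le_one
    · exact min_le_right _ _
  set τ : ℕ → unitInterval := fun i => ⟨min ((i:ℝ)/N) 1, hτmem i⟩ with hτ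
  set z : ℕ → ℝ × ℝ := fun i => γ (τ i) with hz
  set x : ℕ → ℝ := fun i => (z i).1 with hx
  set F : ℕ → ℝ → ℝ := fun i u => Q (u, (z i).2) with hF
  have hτstep : ∀ i : ℕ, dist (τ (i+1)) (τ i) < δ' := by
    intro i
    have h1N : (0:ℝ) < 1/N := by positivity
    have : dist (τ (i+1)) (τ i) ≤ 1/N := by
      rw [Subtype.dist_eq, Real.dist_eq]
      simp only [hτ]
      rw [abs_sub_le_iff]
      have e1 : ((i:ℝ)+1)/N = (i:ℝ)/N + 1/N := by ring
      push_cast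
      rw [e1]
      constructor
      · rcases min_cases ((i:ℝ)/N + 1/N) 1 with ⟨h, _⟩ | ⟨h, _⟩ <;> rw [h] <;>
          rcases min_cases ((i:ℝ)/N) 1 with ⟨h2, h3⟩ | ⟨h2, h3⟩ <;> rw [h2] <;> linarith
      · rcases min_cases ((i:ℝ)/N + 1/N) 1 with ⟨h, h4⟩ | ⟨h, h4⟩ <;> rw [h] <;>
          rcases min_cases ((i:ℝ)/N) 1 with ⟨h2, h3⟩ | ⟨h2, h3⟩ <;> rw [h2] <;> linarith
    calc dist (τ (i+1)) (τ i) ≤ 1/N := this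
      _ < δ' := by
        rw [div_lt_iff₀ hNpos]
        have h2 := (div_lt_iff₀ hδ').1 hN
        have h3 := mul_comm (N:ℝ) δ'
        linarith

  have hzstep : ∀ i : ℕ, dist (z (i+1)) (z i) < ρ := fun i => huc' (hτstep i)
  have hstep : ∀ i, i < N → |x (i+1) - x i| < ρ := by
    intro i _
    have h := hzstep i
    rw [Prod.dist_eq] at h
    have h2 : dist (z (i+1)).1 (z i).1 < ρ := lt_of_le_of_lt (le_max_left _ _) h
    rw [Real.dist_eq] at h2
    exact h2
  have hz0 : z 0 = p := by
    have ht : τ 0 = (0 : unitInterval) := by apply Subtype.ext; simp [hτ]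
    rw [hz]; simp only [ht]; exact γ.source
  have hzN : z N = q := by
    have ht : τ N = (1 : unitInterval) := by
      apply Subtype.ext; simp [hτ, div_self (ne_of_gt hNpos)]
    rw [hz]; simp only [ht]; exact γ.target
  have hFana : ∀ i, i ≤ N → AnalyticOnNhd ℝ (F i) (Ioo (x i - 2*ρ) (x i + 2*ρ)) := by
    intro i _ u hu
    have hmem : ((u, (z i).2) : ℝ × ℝ) ∈ ball (z i) (2*ρ) := by
      rw [mem_ball_prod]
      constructor
      · rw [abs_sub_lt_iff]; exact ⟨by linarith [hu.2], by linarith [hu.1]⟩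
      · simpa using (by positivity : (0:ℝ) < 2*ρ)
    have hline : AnalyticAt ℝ (fun w : ℝ => ((w, (z i).2) : ℝ × ℝ)) u :=
      (analyticAt_id).prod analyticAt_const
    exact AnalyticAt.comp (g := Q) (hQ _ (hball (τ i) hmem)) hline
  have hcons : ∀ i, i < N → EqOn (F i) (F (i+1)) (Ioo (x (i+1) - ρ) (x (i+1) + ρ)) := by
    intro i hiN u hu
    have hmem : ((u, (z (i+1)).2) : ℝ × ℝ) ∈ ball (z i) (2*ρ) := by
      rw [mem_ball_prod]
      constructor
      · have h := hstep i hiN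
        rw [abs_sub_lt_iff] at h ⊢
        exact ⟨by linarith [hu.2, h.1], by linarith [hu.1, h.2]⟩
      · have h := hzstep i
        rw [Prod.dist_eq] at h
        have h2 : dist (z (i+1)).2 (z i).2 < ρ := lt_of_le_of_lt (le_max_right _ _) h
        rw [Real.dist_eq] at h2; linarith
    have hv := vert_const_on_ball hQ hB (hball (τ i)) hmem
    exact hv.symm
  have hchain := chain_glue hρ x F N hFana hstep hcons N 0 N (by omega) (by omega) (le_refl N)
  have hxx : x N = x 0 := by rw [hx]; simp only [hzN, hz0]; exact h1.symm
  rw [hxx] at hchain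
  have hmem0 : x 0 ∈ Ioo (max (x 0) (x 0) - 2*ρ) (min (x 0) (x 0) + 2*ρ) := by
    simp only [max_self, min_self]
    constructor <;> [linarith; linarith]
  have heq := hchain hmem0
  have e0 : F 0 (x 0) = Q p := by rw [hF, hx]; simp only [hz0]
  have eN : F N (x 0) = Q q := by
    rw [hF]
    have : x 0 = q.1 := by rw [hx]; simp only [hz0]; exact h1
    rw [this]
    simp only [hzN]
  rw [e0, eN] at heq
  exact heq



lemma deriv_log_comp {F : ℝ → ℝ} {I : Set ℝ} (hI : IsOpen I) (hF : AnalyticOnNhd ℝ F I)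
    {c : ℝ} (hpos : ∀ x ∈ I, 0 < F x + c) {u : ℝ} (hu : u ∈ I) :
    deriv (fun x => Real.log (F x + c)) u = deriv F u / (F u + c) := by
  have h1 : HasDerivAt (fun x => F x + c) (deriv F u) u :=
    ((hF u hu).differentiableAt.hasDerivAt).add_const c
  have := h1.log (ne_of_gt (hpos u hu))
  exact this.deriv

lemma second_deriv_log {F : ℝ → ℝ} {I : Set ℝ} (hI : IsOpen I) (hF : AnalyticOnNhd ℝ F I)
    {c : ℝ} (hpos : ∀ x ∈ I, 0 < F x + c) {u : ℝ} (hu : u ∈ I) :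
    deriv (fun x => deriv (fun y => Real.log (F y + c)) x) u
      = (deriv (deriv F) u * (F u + c) - (deriv F u)^2) / (F u + c)^2 := by
  have heq : (fun x => deriv (fun y => Real.log (F y + c)) x) =ᶠ[𝓝 u]
      (fun x => deriv F x / (F x + c)) := by
    filter_upwards [hI.mem_nhds hu] with x hx
    exact deriv_log_comp hI hF hpos hx
  rw [heq.deriv_eq]
  have hF' : HasDerivAt (deriv F) (deriv (deriv F) u) u :=
    ((hF.deriv_of_isOpen hI) u hu).differentiableAt.hasDerivAt
  have hden : HasDerivAt (fun x => F x + c) (deriv F u) u :=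
    (hF u hu).differentiableAt.hasDerivAt.add_const c
  have hdiv := hF'.fun_div hden (ne_of_gt (hpos u hu))
  rw [hdiv.deriv]
  ring

lemma diff_E {ψ F G : ℝ → ℝ} {I J : Set ℝ} (hI : IsOpen I) (hJ : IsOpen J)
    (hψ : ∀ x, AnalyticAt ℝ ψ x)
    (hF : AnalyticOnNhd ℝ F I) (hG : AnalyticOnNhd ℝ G J)
    (hE : ∀ u ∈ I, ∀ v ∈ J,
      (deriv F u)^2 + (deriv G v)^2 - (F u + G v) * (deriv (deriv F) u + deriv (deriv G) v)
        = ψ (F u + G v)) :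
    ∀ u ∈ I, ∀ v ∈ J,
      2 * deriv F u * deriv (deriv F) u
        - (deriv F u * (deriv (deriv F) u + deriv (deriv G) v)
           + (F u + G v) * deriv (deriv (deriv F)) u)
        = deriv ψ (F u + G v) * deriv F u := by
  intro u hu v hv
  have hF1 : HasDerivAt F (deriv F u) u := (hF u hu).differentiableAt.hasDerivAt
  have hF2 : HasDerivAt (deriv F) (deriv (deriv F) u) u :=
    ((hF.deriv_of_isOpen hI) u hu).differentiableAt.hasDerivAt
  have hF3 : HasDerivAt (deriv (deriv F)) (deriv (deriv (deriv F)) u) u :=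
    (((hF.deriv_of_isOpen hI).deriv_of_isOpen hI) u hu).differentiableAt.hasDerivAt
  have hL : HasDerivAt
      (fun x => (deriv F x)^2 + (deriv G v)^2
        - (F x + G v) * (deriv (deriv F) x + deriv (deriv G) v))
      (2 * deriv F u * deriv (deriv F) u
        - (deriv F u * (deriv (deriv F) u + deriv (deriv G) v)
           + (F u + G v) * deriv (deriv (deriv F)) u)) u := by
    have h1 : HasDerivAt (fun x => (deriv F x)^2) (2 * deriv F u * deriv (deriv F) u) u := by
      have := hF2.fun_pow 2
      simpa [mul_comm, mul_assoc, mul_left_comm] using this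
    have h2 : HasDerivAt (fun x => (F x + G v) * (deriv (deriv F) x + deriv (deriv G) v))
        (deriv F u * (deriv (deriv F) u + deriv (deriv G) v)
          + (F u + G v) * deriv (deriv (deriv F)) u) u := by
      exact (hF1.add_const (G v)).mul (hF3.add_const (deriv (deriv G) v))
    exact (h1.add_const ((deriv G v)^2)).sub h2
  have hR : HasDerivAt (fun x => ψ (F x + G v)) (deriv ψ (F u + G v) * deriv F u) u := by
    have hψ1 : HasDerivAt ψ (deriv ψ (F u + G v)) (F u + G v) :=
      (hψ _).differentiableAt.hasDerivAt
    exact hψ1.comp u (hF1.add_const (G v))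
  have heq : (fun x => (deriv F x)^2 + (deriv G v)^2
        - (F x + G v) * (deriv (deriv F) x + deriv (deriv G) v)) =ᶠ[𝓝 u]
      (fun x => ψ (F x + G v)) := by
    filter_upwards [hI.mem_nhds hu] with x hx
    exact hE x hx v hv
  exact hL.unique (hR.congr_of_eventuallyEq heq)



lemma key_pointwise
    (P : ℝ → ℝ → ℝ) (φ : ℝ → ℝ) (s : Set (ℝ × ℝ)) (hs : IsOpen s)
    (hP : ∀ p ∈ s, AnalyticAt ℝ (Function.uncurry P) p)
    (hφ : ∀ r : ℝ, AnalyticAt ℝ φ r)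
    (hpos : ∀ p ∈ s, 0 < P p.1 p.2)
    (hmix : ∀ p ∈ s, deriv (fun v => deriv (fun u => P u v) p.1) p.2 = 0)
    (hpde : ∀ p ∈ s,
      -(deriv (fun u' => deriv (fun u'' => Real.log (P u'' p.2)) u') p.1)
        - deriv (fun v' => deriv (fun v'' => Real.log (P p.1 v'')) v') p.2
        = φ (P p.1 p.2))
    {p : ℝ × ℝ} (hp : p ∈ s) :
    fderiv ℝ (Function.uncurry P) p (1, 0) * fderiv ℝ (Function.uncurry P) p (0, 1) *
      (P p.1 p.2 * deriv (deriv (fun r : ℝ => r ^ 2 * φ r)) (P p.1 p.2)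
        - 2 * deriv (fun r : ℝ => r ^ 2 * φ r) (P p.1 p.2)) = 0 := by
  classical
  obtain ⟨a, b⟩ := p
  set Q : ℝ × ℝ → ℝ := Function.uncurry P with hQdef
  set ψ : ℝ → ℝ := fun r : ℝ => r ^ 2 * φ r with hψdef
  by_cases hα : fderiv ℝ Q (a, b) (1, 0) = 0
  · rw [hα]; ring
  by_cases hβ : fderiv ℝ Q (a, b) (0, 1) = 0
  · rw [hβ]; ring
  obtain ⟨r, hr, hball⟩ := Metric.isOpen_iff.1 hs (a, b) hp
  set I := Ioo (a - r) (a + r) with hIdef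
  set J := Ioo (b - r) (b + r) with hJdef
  have hIopen : IsOpen I := isOpen_Ioo
  have hJopen : IsOpen J := isOpen_Ioo
  have haI : a ∈ I := by constructor <;> [linarith; linarith]
  have hbJ : b ∈ J := by constructor <;> [linarith; linarith]
  have hmemball : ∀ {u v : ℝ}, u ∈ I → v ∈ J → ((u, v) : ℝ × ℝ) ∈ ball ((a, b) : ℝ × ℝ) r := by
    intro u v hu hv
    rw [mem_ball_prod]
    constructor
    · simp only []
      rw [abs_sub_lt_iff]; exact ⟨by linarith [hu.2], by linarith [hu.1]⟩
    · simp only []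
      rw [abs_sub_lt_iff]; exact ⟨by linarith [hv.2], by linarith [hv.1]⟩
  have hmems : ∀ {u v : ℝ}, u ∈ I → v ∈ J → ((u, v) : ℝ × ℝ) ∈ s :=
    fun hu hv => hball (hmemball hu hv)
  have hQan : AnalyticOnNhd ℝ Q s := hP
  have hAan : AnalyticOnNhd ℝ (fun z => fderiv ℝ Q z (1, 0)) s :=
    (ContinuousLinearMap.apply ℝ ℝ ((1:ℝ), (0:ℝ))).comp_analyticOnNhd (hQan.fderiv_of_isOpen hs)
  -- vertical constancy of ∂ₓQ
  have hAvert : ∀ u ∈ I, ∀ v ∈ J, fderiv ℝ Q (u, v) (1, 0) = fderiv ℝ Q (u, b) (1, 0) := by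
    intro u hu v hv
    have hkey : ∀ w ∈ J, HasDerivAt (fun w' => fderiv ℝ Q (u, w') (1, 0)) 0 w := by
      intro w hw
      have hmem : ((u, w) : ℝ × ℝ) ∈ s := hmems hu hw
      have hdiff : DifferentiableAt ℝ (fun w' => fderiv ℝ Q (u, w') (1, 0)) w := by
        have hline : AnalyticAt ℝ (fun w' : ℝ => ((u, w') : ℝ × ℝ)) w :=
          analyticAt_const.prod analyticAt_id
        exact (AnalyticAt.comp (hAan _ hmem) hline).differentiableAt
      have hd0 : deriv (fun w' => fderiv ℝ Q (u, w') (1, 0)) w = 0 := by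
        have heq : (fun w' => fderiv ℝ Q (u, w') (1, 0)) =ᶠ[𝓝 w]
            (fun w' => deriv (fun t => P t w') u) := by
          filter_upwards [hJopen.mem_nhds hw] with w' hw'
          exact ((hasDerivAt_slice_fst
            (Q := Q) ((hP _ (hmems hu hw')).differentiableAt)).deriv).symm
        rw [heq.deriv_eq]
        exact hmix (u, w) hmem
      have h2 := hdiff.hasDerivAt
      rwa [hd0] at h2
    exact const_of_hasDerivAt_zero (convex_Ioo _ _) hJopen hkey hv hbJ
  set F : ℝ → ℝ := fun u => Q (u, b) with hFdef
  set G : ℝ → ℝ := fun v => Q (a, v) - Q (a, b) with hGdef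
  have hdecomp : ∀ u ∈ I, ∀ v ∈ J, Q (u, v) = F u + G v := by
    intro u hu v hv
    have hder : ∀ t ∈ I, HasDerivAt (fun t' => Q (t', v) - Q (t', b)) 0 t := by
      intro t ht
      have h1 : HasDerivAt (fun t' => Q (t', v)) (fderiv ℝ Q (t, v) (1, 0)) t :=
        hasDerivAt_slice_fst ((hP _ (hmems ht hv)).differentiableAt)
      have h2 : HasDerivAt (fun t' => Q (t', b)) (fderiv ℝ Q (t, b) (1, 0)) t :=
        hasDerivAt_slice_fst ((hP _ (hmems ht hbJ)).differentiableAt)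
      have h3 := h1.sub h2
      rwa [hAvert t ht v hv, sub_self] at h3
    have h4 := const_of_hasDerivAt_zero (convex_Ioo _ _) hIopen hder hu haI
    simp only [hFdef, hGdef]
    linarith
  have hFan : AnalyticOnNhd ℝ F I := by
    intro u hu
    have hline : AnalyticAt ℝ (fun w : ℝ => ((w, b) : ℝ × ℝ)) u := analyticAt_id.prod analyticAt_const
    exact AnalyticAt.comp (g := Q) (hP _ (hmems hu hbJ)) hline
  have hGan : AnalyticOnNhd ℝ G J := by
    intro v hv
    have hline : AnalyticAt ℝ (fun w : ℝ => ((a, w) : ℝ × ℝ)) v := analyticAt_const.prod analyticAt_id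
    exact (AnalyticAt.comp (g := Q) (hP _ (hmems haI hv)) hline).sub analyticAt_const
  have hsum : ∀ u ∈ I, ∀ v ∈ J, 0 < F u + G v := by
    intro u hu v hv
    rw [← hdecomp u hu v hv]
    exact hpos (u, v) (hmems hu hv)
  have hψan : ∀ x : ℝ, AnalyticAt ℝ ψ x := fun x => ((analyticAt_id).pow 2).mul (hφ x)
  have hψuniv : AnalyticOnNhd ℝ ψ univ := fun x _ => hψan x
  have hψ'univ : AnalyticOnNhd ℝ (deriv ψ) univ := hψuniv.deriv
  -- the polynomial form of the PDE
  have hE : ∀ u ∈ I, ∀ v ∈ J,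
      (deriv F u)^2 + (deriv G v)^2 - (F u + G v) * (deriv (deriv F) u + deriv (deriv G) v)
        = ψ (F u + G v) := by
    intro u hu v hv
    have hpde' := hpde (u, v) (hmems hu hv)
    simp only [] at hpde'
    have t1 : deriv (fun u' => deriv (fun u'' => Real.log (P u'' v)) u') u
        = (deriv (deriv F) u * (F u + G v) - (deriv F u)^2) / (F u + G v)^2 := by
      have heq : (fun u' => deriv (fun u'' => Real.log (P u'' v)) u') =ᶠ[𝓝 u]
          (fun u' => deriv (fun y => Real.log (F y + G v)) u') := by
        filter_upwards [hIopen.mem_nhds hu] with u' hu'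
        apply Filter.EventuallyEq.deriv_eq
        filter_upwards [hIopen.mem_nhds hu'] with y hy
        rw [show P y v = Q (y, v) from rfl, hdecomp y hy v hv]
      rw [heq.deriv_eq]
      exact second_deriv_log hIopen hFan (fun x hx => hsum x hx v hv) hu
    have t2 : deriv (fun v' => deriv (fun v'' => Real.log (P u v'')) v') v
        = (deriv (deriv G) v * (F u + G v) - (deriv G v)^2) / (F u + G v)^2 := by
      have heq : (fun v' => deriv (fun v'' => Real.log (P u v'')) v') =ᶠ[𝓝 v]
          (fun v' => deriv (fun y => Real.log (G y + F u)) v') := by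
        filter_upwards [hJopen.mem_nhds hv] with v' hv'
        apply Filter.EventuallyEq.deriv_eq
        filter_upwards [hJopen.mem_nhds hv'] with y hy
        rw [show P u y = Q (u, y) from rfl, hdecomp u hu y hy, add_comm]
      rw [heq.deriv_eq]
      have hsd := second_deriv_log hJopen hGan
        (fun x hx => by rw [add_comm]; exact hsum u hu x hx) hv
      rw [hsd]
      rw [show G v + F u = F u + G v from add_comm _ _]
    rw [t1, t2] at hpde'
    have hPuv : P u v = F u + G v := by
      rw [show P u v = Q (u, v) from rfl, hdecomp u hu v hv]
    rw [hPuv] at hpde'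
    have hne : (F u + G v) ≠ 0 := ne_of_gt (hsum u hu v hv)
    have hS2 : ((F u + G v))^2 ≠ 0 := pow_ne_zero _ hne
    rw [← neg_div, ← sub_div, div_eq_iff hS2] at hpde'
    rw [hψdef]
    linear_combination hpde'
  have hE' : ∀ v ∈ J, ∀ u ∈ I,
      (deriv G v)^2 + (deriv F u)^2 - (G v + F u) * (deriv (deriv G) v + deriv (deriv F) u)
        = ψ (G v + F u) := by
    intro v hv u hu
    have h := hE u hu v hv
    rw [show G v + F u = F u + G v from add_comm _ _]
    linarith
  have h2full := diff_E hIopen hJopen hψan hFan hGan hE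
  have h3full := diff_E hJopen hIopen hψan hGan hFan hE'
  have e2 := h2full a haI b hbJ
  have e3 := h3full b hbJ a haI
  rw [show G b + F a = F a + G b from add_comm _ _] at e3
  -- derivative of the family (2) in v at b
  have hGan1 : AnalyticOnNhd ℝ (deriv G) J := hGan.deriv_of_isOpen hJopen
  have hGan2 : AnalyticOnNhd ℝ (deriv (deriv G)) J := hGan1.deriv_of_isOpen hJopen
  have k1 : HasDerivAt (fun v => deriv (deriv G) v) (deriv (deriv (deriv G)) b) b :=
    (hGan2 b hbJ).differentiableAt.hasDerivAt
  have k2 : HasDerivAt G (deriv G b) b := (hGan b hbJ).differentiableAt.hasDerivAt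
  have hL := (hasDerivAt_const b (2 * deriv F a * deriv (deriv F) a)).sub
    (((k1.const_add (deriv (deriv F) a)).const_mul (deriv F a)).add
      ((k2.const_add (F a)).mul_const (deriv (deriv (deriv F)) a)))
  have r1 : HasDerivAt (fun v => deriv ψ (F a + G v))
      (deriv (deriv ψ) (F a + G b) * deriv G b) b :=
    ((hψ'univ _ trivial).differentiableAt.hasDerivAt).comp b (k2.const_add (F a))
  have hR := r1.mul_const (deriv F a)
  have heqv : (fun v => 2 * deriv F a * deriv (deriv F) a
      - (deriv F a * (deriv (deriv F) a + deriv (deriv G) v)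
         + (F a + G v) * deriv (deriv (deriv F)) a)) =ᶠ[𝓝 b]
      (fun v => deriv ψ (F a + G v) * deriv F a) := by
    filter_upwards [hJopen.mem_nhds hbJ] with v hv
    exact h2full a haI v hv
  have e1 := hL.unique (hR.congr_of_eventuallyEq heqv)
  -- identify fderivs with one variable derivatives
  have hαF : deriv F a = fderiv ℝ Q (a, b) (1, 0) :=
    (hasDerivAt_slice_fst ((hP _ hp).differentiableAt)).deriv
  have hβF : deriv G b = fderiv ℝ Q (a, b) (0, 1) :=
    ((hasDerivAt_slice_snd ((hP _ hp).differentiableAt)).sub_const (Q (a, b))).deriv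
  have hPab : P a b = F a + G b := by
    rw [show P a b = Q (a, b) from rfl, hdecomp a haI b hbJ]
  have hαn : deriv F a ≠ 0 := by rw [hαF]; exact hα
  have hβn : deriv G b ≠ 0 := by rw [hβF]; exact hβ
  have key : ((F a + G b) * deriv (deriv ψ) (F a + G b) - 2 * deriv ψ (F a + G b))
      * (deriv F a * deriv G b) = 0 := by
    linear_combination deriv F a * e3 + deriv G b * e2 - (F a + G b) * e1
  rcases mul_eq_zero.1 key with hk | hk
  · rw [← hαF, ← hβF, hPab, hk]
    ring
  · exact absurd hk (mul_ne_zero hαn hβn)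

/-- A positive analytic function `P` near the origin with `P(0,0) = 1`, `P_{uv} = 0`
and `Δ log P = φ(P)` (with `Δ f = −f_{uu} − f_{vv}` and `φ` analytic), such that
`ψ(r) = r²φ(r)` satisfies `ψ''(1) − 2ψ'(1) ≠ 0`, depends only on one of the two
variables: `P(u,v) = 1 + f(u)` or `P(u,v) = 1 + g(v)`. -/
theorem P_depends_on_one_variable
    (P : ℝ → ℝ → ℝ) (φ : ℝ → ℝ) (s : Set (ℝ × ℝ))
    (hs : IsOpen s) (hconn : IsPreconnected s) (h0 : ((0 : ℝ), (0 : ℝ)) ∈ s)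
    (hP : ∀ p ∈ s, AnalyticAt ℝ (Function.uncurry P) p)
    (hφ : ∀ r : ℝ, AnalyticAt ℝ φ r)
    (hpos : ∀ p ∈ s, 0 < P p.1 p.2)
    (hP00 : P 0 0 = 1)
    (hmix : ∀ p ∈ s, deriv (fun v => deriv (fun u => P u v) p.1) p.2 = 0)
    (hpde : ∀ p ∈ s,
      -(deriv (fun u' => deriv (fun u'' => Real.log (P u'' p.2)) u') p.1)
        - deriv (fun v' => deriv (fun v'' => Real.log (P p.1 v'')) v') p.2
        = φ (P p.1 p.2))
    (hψ : iteratedDeriv 2 (fun r : ℝ => r ^ 2 * φ r) 1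
        - 2 * deriv (fun r : ℝ => r ^ 2 * φ r) 1 ≠ 0) :
    (∃ f : ℝ → ℝ, f 0 = 0 ∧ ∀ p ∈ s, P p.1 p.2 = 1 + f p.1)
      ∨ (∃ g : ℝ → ℝ, g 0 = 0 ∧ ∀ p ∈ s, P p.1 p.2 = 1 + g p.2) := by
  classical
  set Q : ℝ × ℝ → ℝ := Function.uncurry P with hQdef
  set ψ : ℝ → ℝ := fun r : ℝ => r ^ 2 * φ r with hψdef
  have hψ2 : 1 * deriv (deriv ψ) 1 - 2 * deriv ψ 1 ≠ 0 := by
    have h2 : iteratedDeriv 2 ψ = deriv (deriv ψ) := by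
      rw [iteratedDeriv_succ, iteratedDeriv_one]
    rw [one_mul]
    rwa [h2] at hψ
  have hQan : AnalyticOnNhd ℝ Q s := hP
  have hA : AnalyticOnNhd ℝ (fun z => fderiv ℝ Q z ((1 : ℝ), (0 : ℝ))) s :=
    (ContinuousLinearMap.apply ℝ ℝ ((1:ℝ), (0:ℝ))).comp_analyticOnNhd (hQan.fderiv_of_isOpen hs)
  have hB : AnalyticOnNhd ℝ (fun z => fderiv ℝ Q z ((0 : ℝ), (1 : ℝ))) s :=
    (ContinuousLinearMap.apply ℝ ℝ ((0:ℝ), (1:ℝ))).comp_analyticOnNhd (hQan.fderiv_of_isOpen hs)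
  have hW : AnalyticOnNhd ℝ
      (fun z => fderiv ℝ Q z ((1 : ℝ), (0 : ℝ)) * fderiv ℝ Q z ((0 : ℝ), (1 : ℝ))) s :=
    fun z hz => (hA z hz).mul (hB z hz)
  have hkey : ∀ p ∈ s,
      fderiv ℝ Q p ((1:ℝ), (0:ℝ)) * fderiv ℝ Q p ((0:ℝ), (1:ℝ)) *
        (P p.1 p.2 * deriv (deriv ψ) (P p.1 p.2) - 2 * deriv ψ (P p.1 p.2)) = 0 :=
    fun p hp => key_pointwise P φ s hs hP hφ hpos hmix hpde hp
  have hψuniv : AnalyticOnNhd ℝ ψ univ := fun x _ => ((analyticAt_id).pow 2).mul (hφ x)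
  have hψ'c : Continuous (deriv ψ) := continuous_iff_continuousAt.2
    fun x => (hψuniv.deriv x trivial).continuousAt
  have hψ''c : Continuous (deriv (deriv ψ)) := continuous_iff_continuousAt.2
    fun x => (hψuniv.deriv.deriv x trivial).continuousAt
  set c : ℝ × ℝ → ℝ := fun z => Q z * deriv (deriv ψ) (Q z) - 2 * deriv ψ (Q z) with hcdef
  have hccont : ContinuousOn c s := by
    have hQc : ContinuousOn Q s := fun z hz => (hP z hz).continuousAt.continuousWithinAt
    exact (hQc.mul ((hψ''c.comp_continuousOn hQc))).sub
      (continuousOn_const.mul (hψ'c.comp_continuousOn hQc))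
  have hopen : IsOpen (s ∩ c ⁻¹' ({0}ᶜ)) :=
    hccont.isOpen_inter_preimage hs isOpen_compl_singleton
  have h0mem : ((0:ℝ), (0:ℝ)) ∈ s ∩ c ⁻¹' ({0}ᶜ) := by
    refine ⟨h0, ?_⟩
    have hQ0 : Q ((0:ℝ), (0:ℝ)) = 1 := hP00
    simp only [mem_preimage, mem_compl_iff, mem_singleton_iff, hcdef, hQ0]
    exact hψ2
  have hWev : (fun z => fderiv ℝ Q z ((1:ℝ), (0:ℝ)) * fderiv ℝ Q z ((0:ℝ), (1:ℝ)))
      =ᶠ[𝓝 ((0:ℝ), (0:ℝ))] 0 := by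
    filter_upwards [hopen.mem_nhds h0mem] with z hz
    have hk := hkey z hz.1
    rcases mul_eq_zero.1 hk with h | h
    · exact h
    · exact absurd h hz.2
  have hW0 : EqOn (fun z => fderiv ℝ Q z ((1:ℝ), (0:ℝ)) * fderiv ℝ Q z ((0:ℝ), (1:ℝ))) 0 s :=
    hW.eqOn_zero_of_preconnected_of_eventuallyEq_zero hconn h0 hWev
  by_cases hcase : ∀ z ∈ s, fderiv ℝ Q z ((1:ℝ), (0:ℝ)) = 0
  · -- ∂ₓP ≡ 0 : P depends only on the second variable
    right
    set L : (ℝ × ℝ) →L[ℝ] (ℝ × ℝ) :=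
      (ContinuousLinearMap.snd ℝ ℝ ℝ).prod (ContinuousLinearMap.fst ℝ ℝ ℝ) with hLdef
    set Qs : ℝ × ℝ → ℝ := fun z => Q (z.2, z.1) with hQsdef
    set ss : Set (ℝ × ℝ) := Prod.swap ⁻¹' s with hssdef
    have hss_open : IsOpen ss := hs.preimage continuous_swap
    have hss_conn : IsPreconnected ss := by
      rw [hssdef, ← image_swap_eq_preimage_swap]
      exact hconn.image _ continuous_swap.continuousOn
    have hmemss : ∀ {p : ℝ × ℝ}, p ∈ s → Prod.swap p ∈ ss := by
      intro p hp
      simp [hssdef, Prod.swap_swap, hp]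
    have hQs_an : ∀ z ∈ ss, AnalyticAt ℝ Qs z := by
      intro z hz
      have hline : AnalyticAt ℝ (fun w : ℝ × ℝ => ((w.2, w.1) : ℝ × ℝ)) z :=
        analyticAt_snd.prod analyticAt_fst
      exact AnalyticAt.comp (g := Q) (hP _ hz) hline
    have hBs : ∀ z ∈ ss, fderiv ℝ Qs z ((0:ℝ), (1:ℝ)) = 0 := by
      intro z hz
      have hL : HasFDerivAt Qs ((fderiv ℝ Q (L z)).comp L) z := by
        have h1 : HasFDerivAt Q (fderiv ℝ Q (L z)) (L z) := by
          have hzs : L z ∈ s := hz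
          exact (hP _ hzs).differentiableAt.hasFDerivAt
        exact h1.comp z (L.hasFDerivAt)
      have := hL.fderiv
      rw [this]
      have hLz : ((0:ℝ),(1:ℝ)) = ((0:ℝ),(1:ℝ)) := rfl
      show fderiv ℝ Q (L z) (L ((0:ℝ),(1:ℝ))) = 0
      have : L ((0:ℝ),(1:ℝ)) = ((1:ℝ),(0:ℝ)) := rfl
      rw [this]
      exact hcase (L z) hz
    have hconst : ∀ p ∈ s, ∀ q ∈ s, p.2 = q.2 → Q p = Q q := by
      intro p hp q hq hpq
      have := fiber_const hss_open hss_conn hQs_an hBs (hmemss hp) (hmemss hq) hpq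
      exact this
    refine ⟨fun y => if h : ∃ x, ((x, y) : ℝ × ℝ) ∈ s then Q (h.choose, y) - 1 else 0, ?_, ?_⟩
    · have hex : ∃ x, ((x, (0:ℝ)) : ℝ × ℝ) ∈ s := ⟨0, h0⟩
      simp only [dif_pos hex]
      have h1 : Q (hex.choose, (0:ℝ)) = Q ((0:ℝ), (0:ℝ)) :=
        hconst _ hex.choose_spec _ h0 rfl
      have h2 : Q ((0:ℝ), (0:ℝ)) = 1 := hP00
      rw [h1, h2]; ring
    · intro p hp
      have hex : ∃ x, ((x, p.2) : ℝ × ℝ) ∈ s := ⟨p.1, by rw [Prod.mk.eta]; exact hp⟩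
      simp only [dif_pos hex]
      have h1 : Q (hex.choose, p.2) = Q p := by
        have := hconst _ hex.choose_spec p hp rfl
        exact this
      rw [h1]
      show Q p = 1 + (Q p - 1)
      ring
  · push_neg at hcase
    obtain ⟨z₀, hz₀s, hz₀⟩ := hcase
    have hBev : (fun z => fderiv ℝ Q z ((0:ℝ), (1:ℝ))) =ᶠ[𝓝 z₀] 0 := by
      have hAc : ContinuousAt (fun z => fderiv ℝ Q z ((1:ℝ), (0:ℝ))) z₀ :=
        (hA z₀ hz₀s).continuousAt
      have hne : {z : ℝ × ℝ | fderiv ℝ Q z ((1:ℝ), (0:ℝ)) ≠ 0} ∈ 𝓝 z₀ := by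
        have := hAc.preimage_mem_nhds (isOpen_compl_singleton.mem_nhds hz₀)
        exact this
      filter_upwards [hne, hs.mem_nhds hz₀s] with z h1 h2
      have hz := hW0 h2
      simp only [Pi.zero_apply] at hz ⊢
      exact (mul_eq_zero.1 hz).resolve_left h1
    have hB0 : EqOn (fun z => fderiv ℝ Q z ((0:ℝ), (1:ℝ))) 0 s :=
      hB.eqOn_zero_of_preconnected_of_eventuallyEq_zero hconn hz₀s hBev
    left
    have hconst : ∀ p ∈ s, ∀ q ∈ s, p.1 = q.1 → Q p = Q q := by
      intro p hp q hq hpq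
      exact fiber_const hs hconn hP (fun z hz => hB0 hz) hp hq hpq
    refine ⟨fun x => if h : ∃ y, ((x, y) : ℝ × ℝ) ∈ s then Q (x, h.choose) - 1 else 0, ?_, ?_⟩
    · have hex : ∃ y, (((0:ℝ), y) : ℝ × ℝ) ∈ s := ⟨0, h0⟩
      simp only [dif_pos hex]
      have h1 : Q ((0:ℝ), hex.choose) = Q ((0:ℝ), (0:ℝ)) :=
        hconst _ hex.choose_spec _ h0 rfl
      have h2 : Q ((0:ℝ), (0:ℝ)) = 1 := hP00
      rw [h1, h2]; ring
    · intro p hp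
      have hex : ∃ y, ((p.1, y) : ℝ × ℝ) ∈ s := ⟨p.2, by rw [Prod.mk.eta]; exact hp⟩
      simp only [dif_pos hex]
      have h1 : Q (p.1, hex.choose) = Q p := hconst _ hex.choose_spec p hp rfl
      rw [h1]
      show Q p = 1 + (Q p - 1)
      ring

end
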